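/- arXiv:2005.03723 — 2 statements merged into one kernel-verified Lean document; each statement's English description precedes it below -/
import Mathlib

section
/- Reduced measure formula: let μ be 1/r-excessive for a transient transfer operator with 0 < r ≤ R, and let A be a set measurable with respect to the partition into n-cylinders. Define 𝓕_A := 𝟙_A Σ_{n≥0} r^n (𝓛_{A^c})^n where 𝓛_B(f) := 𝓛(𝟙_B f). Then the reduced measure R_A(μ) := ⋀{ ν : ν is 1/r-excessive and ν|_A ≥ μ|_A } equals 𝓕_A*(μ). -/
open MeasureTheory
open scoped ENNReal

/-- Splitting an `ℝ≥0∞`-valued series into an initial segment and a tail. -/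
private lemma tsum_split_ennreal (f : ℕ → ℝ≥0∞) (n : ℕ) :
    ∑' m, f m = (∑ m ∈ Finset.range n, f m) + ∑' k, f (n + k) := by
  have h1 : ∀ m, f m = (if m < n then f m else 0) + (if m < n then 0 else f m) := by
    intro m; split <;> simp
  rw [tsum_congr h1, Summable.tsum_add ENNReal.summable ENNReal.summable]
  congr 1
  · rw [tsum_eq_sum (s := Finset.range n) (fun m hm => by
      simp [Finset.mem_range.not.mp hm])]
    exact Finset.sum_congr rfl fun m hm => by simp [Finset.mem_range.mp hm]
  · refine tsum_eq_tsum_of_ne_zero_bij (fun x => n + x.1) ?_ ?_ ?_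
    · intro a b hab
      simpa [Subtype.ext_iff] using hab
    · intro x hx
      have hxn : ¬ x < n := by
        intro h; simp [h] at hx
      have hxe : n + (x - n) = x := Nat.add_sub_cancel' (Nat.le_of_not_lt hxn)
      refine ⟨⟨x - n, ?_⟩, hxe⟩
      simp only [Function.mem_support, hxe]
      simpa [hxn] using hx
    · intro x
      simp


/-- **reduced measure.** Let `μ` be `1/r`-excessive for a transient
transfer operator, `0 < r ≤ R`, and `A` a union of `n`-cylinders. With
`𝓕_A = 𝟙_A Σ_n r^n (𝓛_{A^c})^n`, whose dual is
`𝓕_A*(μ) = Σ_n r^n D^n(μ|_A)` with `D(ν) = (𝓛*ν)|_{A^c}`, the reduced measure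
`R_A(μ) = ⋀{ ν : ν 1/r-excessive, ν|_A ≥ μ|_A }` equals `𝓕_A*(μ)`; i.e. `𝓕_A*(μ)` is
the least `1/r`-excessive measure dominating `μ` on `A`. -/
theorem reduced_measure_eq_FA
    {X : Type*} [MeasurableSpace X]
    (Ldual : Measure X → Measure X)
    (hmono : Monotone Ldual)
    (hadd : ∀ μ ν : Measure X, Ldual (μ + ν) = Ldual μ + Ldual ν)
    (hsmul : ∀ (c : ℝ≥0∞) (μ : Measure X), Ldual (c • μ) = c • Ldual μ)
    (r : ℝ) (hr : 0 < r)
    (μ : Measure X)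
    (hexc : Ldual μ ≤ (ENNReal.ofReal r)⁻¹ • μ)
    -- transience: the Green measure of μ is σ-finite
    (htrans : SigmaFinite (Measure.sum fun n : ℕ => ENNReal.ofReal (r ^ n) • Ldual^[n] μ))
    (A : Set X) (hA : MeasurableSet A) :
    (Ldual (Measure.sum fun n : ℕ =>
        ENNReal.ofReal (r ^ n) • (fun ν : Measure X => (Ldual ν).restrict Aᶜ)^[n] (μ.restrict A)) ≤
      (ENNReal.ofReal r)⁻¹ • Measure.sum fun n : ℕ =>
        ENNReal.ofReal (r ^ n) • (fun ν : Measure X => (Ldual ν).restrict Aᶜ)^[n] (μ.restrict A)) ∧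
    μ.restrict A ≤ (Measure.sum fun n : ℕ =>
        ENNReal.ofReal (r ^ n) • (fun ν : Measure X => (Ldual ν).restrict Aᶜ)^[n] (μ.restrict A)).restrict A ∧
    (∀ ν : Measure X, Ldual ν ≤ (ENNReal.ofReal r)⁻¹ • ν → μ.restrict A ≤ ν.restrict A →
      (Measure.sum fun n : ℕ =>
        ENNReal.ofReal (r ^ n) • (fun ν' : Measure X => (Ldual ν').restrict Aᶜ)^[n] (μ.restrict A)) ≤ ν) := by
  classical
  set c : ℝ≥0∞ := ENNReal.ofReal r with hc
  have hc0 : c ≠ 0 := by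
    simpa [hc] using (ENNReal.ofReal_pos.mpr hr).ne'
  have hctop : c ≠ ⊤ := ENNReal.ofReal_ne_top
  have hpow : ∀ n : ℕ, ENNReal.ofReal (r ^ n) = c ^ n := fun n => by
    rw [hc, ENNReal.ofReal_pow hr.le]
  simp only [hpow] at htrans ⊢
  set D : Measure X → Measure X := fun ν => (Ldual ν).restrict Aᶜ with hD
  set m : ℕ → Measure X := fun n => c ^ n • D^[n] (μ.restrict A) with hm
  set F : Measure X := Measure.sum m with hF
  set G : Measure X := Measure.sum (fun n : ℕ => c ^ n • Ldual^[n] μ) with hG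
  -- basic facts
  have hL0 : Ldual 0 = 0 := by
    have h := hsmul 0 μ
    simpa using h
  have hDdef : ∀ ν, D ν = (Ldual ν).restrict Aᶜ := fun ν => rfl
  have hDmono : Monotone D := fun a b hab =>
    Measure.restrict_mono (le_refl _) (hmono hab)
  have hDadd : ∀ a b : Measure X, D (a + b) = D a + D b := by
    intro a b; simp only [hDdef, hadd, Measure.restrict_add]
  have hDsmul : ∀ (x : ℝ≥0∞) (a : Measure X), D (x • a) = x • D a := by
    intro x a; simp only [hDdef, hsmul, Measure.restrict_smul]
  have hDit_smul : ∀ (n : ℕ) (x : ℝ≥0∞) (a : Measure X), D^[n] (x • a) = x • D^[n] a := by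
    intro n
    induction n with
    | zero => intro x a; simp
    | succ n ih =>
      intro x a
      rw [Function.iterate_succ_apply, Function.iterate_succ_apply, hDsmul, ih]
  have hDit_mono : ∀ n : ℕ, Monotone (D^[n]) := fun n => hDmono.iterate n
  have hD_le_L : ∀ a : Measure X, D a ≤ Ldual a := fun a => Measure.restrict_le_self
  have hDit_le_Lit : ∀ (n : ℕ) (a : Measure X), D^[n] a ≤ Ldual^[n] a := by
    intro n
    induction n with
    | zero => intro a; simp
    | succ n ih =>
      intro a
      rw [Function.iterate_succ_apply', Function.iterate_succ_apply']
      exact le_trans (hD_le_L _) (hmono (ih a))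
  -- finite additivity over finite sums
  have hL_finsum : ∀ (T : Finset ℕ) (f : ℕ → Measure X),
      Ldual (∑ i ∈ T, f i) = ∑ i ∈ T, Ldual (f i) := by
    intro T f
    induction T using Finset.induction_on with
    | empty => simpa using hL0
    | insert _ _ hnotmem ih =>
      rw [Finset.sum_insert hnotmem, hadd, ih, Finset.sum_insert hnotmem]
  have hD_finsum : ∀ (T : Finset ℕ) (f : ℕ → Measure X),
      D (∑ i ∈ T, f i) = ∑ i ∈ T, D (f i) := by
    intro T f
    induction T using Finset.induction_on with
    | empty =>
      have : D 0 = 0 := by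
        have h := hDsmul 0 0
        simpa using h
      simpa using this
    | insert _ _ hnotmem ih =>
      rw [Finset.sum_insert hnotmem, hDadd, ih, Finset.sum_insert hnotmem]
  have hDit_finsum : ∀ (n : ℕ) (T : Finset ℕ) (f : ℕ → Measure X),
      D^[n] (∑ i ∈ T, f i) = ∑ i ∈ T, D^[n] (f i) := by
    intro n
    induction n with
    | zero => intro T f; simp
    | succ n ih =>
      intro T f
      rw [Function.iterate_succ_apply', ih, hD_finsum]
      exact Finset.sum_congr rfl fun i _ => (Function.iterate_succ_apply' D n (f i)).symm
  -- smul monotonicity (setwise)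
  have hsmul_mono : ∀ (x : ℝ≥0∞) {a b : Measure X}, a ≤ b → x • a ≤ x • b := by
    intro x a b hab
    rw [Measure.le_iff]
    intro s hs
    simp only [Measure.smul_apply, smul_eq_mul]
    exact mul_le_mul_right (Measure.le_iff'.mp hab s) x
  -- m lemmas
  have hm0 : m 0 = μ.restrict A := by simp [hm]
  have hm_succ : ∀ n : ℕ, m (n + 1) = c • D (m n) := by
    intro n
    simp only [hm]
    rw [Function.iterate_succ_apply', hDsmul, pow_succ, mul_comm (c ^ n) c, mul_smul]
  have hm_split : ∀ n k : ℕ, m (n + k) = c ^ n • D^[n] (m k) := by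
    intro n k
    simp only [hm]
    rw [Function.iterate_add_apply, hDit_smul, pow_add, mul_smul]
  -- F applied
  have hFapply : ∀ {s : Set X}, MeasurableSet s → F s = ∑' n, m n s := by
    intro s hs
    rw [hF, Measure.sum_apply _ hs]
  have hpart_le_F : ∀ T : Finset ℕ, (∑ n ∈ T, m n) ≤ F := by
    intro T
    rw [Measure.le_iff]
    intro s hs
    rw [Measure.finset_sum_apply, hFapply hs]
    exact ENNReal.sum_le_tsum T
  -- excessivity in multiplicative form
  have hexc' : c • Ldual μ ≤ μ := by
    rw [Measure.le_iff]
    intro s hs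
    have h1 : Ldual μ s ≤ c⁻¹ * μ s := by
      have := Measure.le_iff'.mp hexc s
      simpa [Measure.smul_apply, smul_eq_mul] using this
    calc (c • Ldual μ) s = c * Ldual μ s := by simp [Measure.smul_apply, smul_eq_mul]
      _ ≤ c * (c⁻¹ * μ s) := mul_le_mul_right h1 c
      _ = μ s := by rw [← mul_assoc, ENNReal.mul_inv_cancel hc0 hctop, one_mul]
  -- Part (3)
  have hmain3 : ∀ ν : Measure X, Ldual ν ≤ c⁻¹ • ν → μ.restrict A ≤ ν.restrict A → F ≤ ν := by
    intro ν hexcν hres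
    have hcD : ∀ a : Measure X, a ≤ ν → c • D a ≤ ν.restrict Aᶜ := by
      intro a ha
      have h1 : D a ≤ D ν := hDmono ha
      have h2 : D ν ≤ c⁻¹ • ν.restrict Aᶜ := by
        rw [hDdef]
        calc (Ldual ν).restrict Aᶜ ≤ (c⁻¹ • ν).restrict Aᶜ :=
              Measure.restrict_mono (le_refl _) hexcν
          _ = c⁻¹ • ν.restrict Aᶜ := Measure.restrict_smul _ _ _
      calc c • D a ≤ c • (c⁻¹ • ν.restrict Aᶜ) := hsmul_mono c (le_trans h1 h2)
        _ = ν.restrict Aᶜ := by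
            rw [smul_smul, ENNReal.mul_inv_cancel hc0 hctop, one_smul]
    have hSle : ∀ N : ℕ, (∑ n ∈ Finset.range N, m n) ≤ ν := by
      intro N
      induction N with
      | zero =>
        simp only [Finset.range_zero, Finset.sum_empty]
        exact Measure.zero_le ν
      | succ N ih =>
        have hrw : (∑ n ∈ Finset.range (N + 1), m n)
            = c • D (∑ n ∈ Finset.range N, m n) + m 0 := by
          rw [Finset.sum_range_succ']
          congr 1
          rw [hD_finsum, Finset.smul_sum]
          exact Finset.sum_congr rfl fun n _ => hm_succ n
        rw [hrw]
        have h1 : c • D (∑ n ∈ Finset.range N, m n) ≤ ν.restrict Aᶜ := hcD _ ih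
        have h2 : m 0 ≤ ν.restrict A := by rw [hm0]; exact hres
        calc c • D (∑ n ∈ Finset.range N, m n) + m 0
            ≤ ν.restrict Aᶜ + ν.restrict A := add_le_add h1 h2
          _ = ν := Measure.restrict_compl_add_restrict hA
    rw [Measure.le_iff]
    intro s hs
    rw [hFapply hs, ENNReal.tsum_eq_iSup_nat]
    refine iSup_le fun N => ?_
    calc (∑ n ∈ Finset.range N, m n s) = (∑ n ∈ Finset.range N, m n) s := by
          rw [Measure.finset_sum_apply]
      _ ≤ ν s := Measure.le_iff'.mp (hSle N) s
  -- F ≤ μ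
  have hFmu : F ≤ μ := hmain3 μ hexc (le_refl _)
  -- Part (2)
  have hmain2 : μ.restrict A ≤ F.restrict A := by
    rw [Measure.le_iff]
    intro s hs
    rw [Measure.restrict_apply hs, Measure.restrict_apply hs]
    have h0 : μ.restrict A (s ∩ A) = μ (s ∩ A) := by
      rw [Measure.restrict_apply (hs.inter hA), Set.inter_assoc, Set.inter_self]
    have h1 : m 0 (s ∩ A) ≤ F (s ∩ A) := by
      rw [hFapply (hs.inter hA)]
      exact ENNReal.le_tsum 0
    calc μ (s ∩ A) = m 0 (s ∩ A) := by rw [hm0, h0]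
      _ ≤ F (s ∩ A) := h1
  -- Balayage bound: c • Ldual S_N ≤ F
  have hbal : ∀ N : ℕ, c • Ldual (∑ n ∈ Finset.range N, m n) ≤ F := by
    intro N
    have hSN_le_mu : (∑ n ∈ Finset.range N, m n) ≤ μ := le_trans (hpart_le_F _) hFmu
    have hcLS_le_mu : c • Ldual (∑ n ∈ Finset.range N, m n) ≤ μ :=
      le_trans (hsmul_mono c (hmono hSN_le_mu)) hexc'
    -- split into Aᶜ part and A part
    have hsplit : c • Ldual (∑ n ∈ Finset.range N, m n)
        = (c • Ldual (∑ n ∈ Finset.range N, m n)).restrict Aᶜ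
          + (c • Ldual (∑ n ∈ Finset.range N, m n)).restrict A :=
      (Measure.restrict_compl_add_restrict hA).symm
    -- the Aᶜ part equals ∑_{n<N} m (n+1)
    have hAc : (c • Ldual (∑ n ∈ Finset.range N, m n)).restrict Aᶜ
        = ∑ n ∈ Finset.range N, m (n + 1) := by
      rw [Measure.restrict_smul, hL_finsum]
      have : (∑ n ∈ Finset.range N, Ldual (m n)).restrict Aᶜ
          = ∑ n ∈ Finset.range N, (Ldual (m n)).restrict Aᶜ := by
        induction (Finset.range N) using Finset.induction_on with
        | empty => simp
        | insert _ _ hnm ih =>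
          rw [Finset.sum_insert hnm, Finset.sum_insert hnm, Measure.restrict_add, ih]
      rw [this, Finset.smul_sum]
      exact Finset.sum_congr rfl fun n _ => by rw [← hDdef, ← hm_succ]
    have hApart : (c • Ldual (∑ n ∈ Finset.range N, m n)).restrict A ≤ m 0 := by
      rw [hm0]
      exact Measure.restrict_mono (le_refl _) hcLS_le_mu
    calc c • Ldual (∑ n ∈ Finset.range N, m n)
        = (c • Ldual (∑ n ∈ Finset.range N, m n)).restrict Aᶜ
          + (c • Ldual (∑ n ∈ Finset.range N, m n)).restrict A := hsplit
      _ ≤ (∑ n ∈ Finset.range N, m (n + 1)) + m 0 := by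
          rw [hAc]; exact add_le_add (le_refl _) hApart
      _ = ∑ n ∈ Finset.range (N + 1), m n := (Finset.sum_range_succ' m N).symm
      _ ≤ F := hpart_le_F _
  -- Key tail bound
  have htail_le : ∀ n : ℕ, (Measure.sum fun k => m (n + k)) ≤ c ^ n • Ldual^[n] μ := by
    intro n
    rw [Measure.le_iff]
    intro s hs
    rw [Measure.sum_apply _ hs]
    have hb : ∀ T : Finset ℕ, (∑ k ∈ T, m (n + k) s) ≤ (c ^ n • Ldual^[n] μ) s := by
      intro T
      have h1 : (∑ k ∈ T, m (n + k)) = c ^ n • D^[n] (∑ k ∈ T, m k) := by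
        rw [hDit_finsum, Finset.smul_sum]
        exact Finset.sum_congr rfl fun k _ => hm_split n k
      have h2 : D^[n] (∑ k ∈ T, m k) ≤ Ldual^[n] μ :=
        le_trans (hDit_mono n (le_trans (hpart_le_F T) hFmu)) (hDit_le_Lit n μ)
      calc (∑ k ∈ T, m (n + k) s) = (∑ k ∈ T, m (n + k)) s := by
            rw [Measure.finset_sum_apply]
        _ = (c ^ n • D^[n] (∑ k ∈ T, m k)) s := by rw [h1]
        _ ≤ (c ^ n • Ldual^[n] μ) s := by
            simp only [Measure.smul_apply, smul_eq_mul]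
            exact mul_le_mul_right (Measure.le_iff'.mp h2 s) _
    rw [ENNReal.tsum_eq_iSup_sum]
    exact iSup_le hb
  -- decomposition of F
  have hFdecomp : ∀ n : ℕ, F = (∑ i ∈ Finset.range n, m i) + Measure.sum (fun k => m (n + k)) := by
    intro n
    ext s hs
    rw [Measure.add_apply, hFapply hs, Measure.finset_sum_apply, Measure.sum_apply _ hs]
    exact tsum_split_ennreal (fun i => m i s) n
  -- Green measure applied
  have hGapply : ∀ {s : Set X}, MeasurableSet s → G s = ∑' n, (c ^ n • Ldual^[n] μ) s := by
    intro s hs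
    rw [hG, Measure.sum_apply _ hs]
  -- main part (1) on G-finite sets
  have hkey : ∀ t : Set X, MeasurableSet t → G t ≠ ⊤ → c * Ldual F t ≤ F t := by
    intro t ht hGt
    by_contra hcon
    push_neg at hcon
    have hδ : 0 < c * Ldual F t - F t := tsub_pos_of_lt hcon
    have hstep : ∀ n : ℕ, c * Ldual F t - F t ≤ (c ^ (n + 1) • Ldual^[n + 1] μ) t := by
      intro n
      have h1 : Ldual F = Ldual (∑ i ∈ Finset.range n, m i)
          + Ldual (Measure.sum fun k => m (n + k)) := by
        rw [hFdecomp n] at *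
        exact hadd _ _
      have h2 : c * Ldual F t
          = c * Ldual (∑ i ∈ Finset.range n, m i) t
            + c * Ldual (Measure.sum fun k => m (n + k)) t := by
        rw [h1]
        simp [Measure.add_apply, mul_add]
      have h3 : c * Ldual (∑ i ∈ Finset.range n, m i) t ≤ F t := by
        have := Measure.le_iff'.mp (hbal n) t
        simpa [Measure.smul_apply, smul_eq_mul] using this
      have h4 : c * Ldual (Measure.sum fun k => m (n + k)) t
          ≤ (c ^ (n + 1) • Ldual^[n + 1] μ) t := by
        have h5 : Ldual (Measure.sum fun k => m (n + k)) ≤ c ^ n • Ldual^[n + 1] μ := by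
          calc Ldual (Measure.sum fun k => m (n + k))
              ≤ Ldual (c ^ n • Ldual^[n] μ) := hmono (htail_le n)
            _ = c ^ n • Ldual (Ldual^[n] μ) := hsmul _ _
            _ = c ^ n • Ldual^[n + 1] μ := by
                rw [← Function.iterate_succ_apply' Ldual n μ]
        calc c * Ldual (Measure.sum fun k => m (n + k)) t
            ≤ c * (c ^ n • Ldual^[n + 1] μ) t := mul_le_mul_right (Measure.le_iff'.mp h5 t) c
          _ = (c ^ (n + 1) • Ldual^[n + 1] μ) t := by
              simp only [Measure.smul_apply, smul_eq_mul, ← mul_assoc]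
              rw [← pow_succ']
        
      have h6 : c * Ldual F t ≤ F t + (c ^ (n + 1) • Ldual^[n + 1] μ) t := by
        rw [h2]; exact add_le_add h3 h4
      exact tsub_le_iff_left.mpr h6
    have hsum1 : (∑' _ : ℕ, (c * Ldual F t - F t)) ≤ ∑' n, (c ^ (n + 1) • Ldual^[n + 1] μ) t :=
      ENNReal.tsum_le_tsum hstep
    have hsum2 : (∑' n : ℕ, (c ^ (n + 1) • Ldual^[n + 1] μ) t) ≤ G t := by
      have hcongr : ∀ k : ℕ, (c ^ (k + 1) • Ldual^[k + 1] μ) t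
          = (fun n => (c ^ n • Ldual^[n] μ) t) (1 + k) := by
        intro k; simp only [Nat.add_comm]
      rw [hGapply ht, tsum_split_ennreal (fun n => (c ^ n • Ldual^[n] μ) t) 1,
        tsum_congr hcongr]
      exact le_add_self
    have htop : (∑' _ : ℕ, (c * Ldual F t - F t)) = ⊤ :=
      ENNReal.tsum_const_eq_top_of_ne_zero hδ.ne'
    have hle : (⊤ : ℝ≥0∞) ≤ G t := by
      rw [← htop]; exact le_trans hsum1 hsum2
    exact hGt (top_le_iff.mp hle)
  -- part (1): reduce to G-finite sets via spanning sets
  have hmain1 : ∀ s : Set X, MeasurableSet s → c * Ldual F s ≤ F s := by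
    intro s hs
    have hcover : s = ⋃ k, s ∩ spanningSets G k := by
      rw [← Set.inter_iUnion, iUnion_spanningSets, Set.inter_univ]
    have hmonoseq : Monotone fun k => s ∩ spanningSets G k := fun i j hij =>
      Set.inter_subset_inter_right _ (monotone_spanningSets G hij)
    have h1 : Ldual F s = ⨆ k, Ldual F (s ∩ spanningSets G k) := by
      conv_lhs => rw [hcover]
      exact hmonoseq.measure_iUnion
    rw [h1, ENNReal.mul_iSup]
    refine iSup_le fun k => ?_
    have hfin : G (s ∩ spanningSets G k) ≠ ⊤ :=
      (lt_of_le_of_lt (measure_mono Set.inter_subset_right) (measure_spanningSets_lt_top G k)).ne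
    calc c * Ldual F (s ∩ spanningSets G k)
        ≤ F (s ∩ spanningSets G k) :=
          hkey _ (hs.inter (measurableSet_spanningSets G k)) hfin
      _ ≤ F s := measure_mono Set.inter_subset_left
  refine ⟨?_, hmain2, fun ν h1 h2 => hmain3 ν h1 h2⟩
  rw [Measure.le_iff]
  intro s hs
  have h := hmain1 s hs
  simp only [Measure.smul_apply, smul_eq_mul]
  calc Ldual F s = c⁻¹ * (c * Ldual F s) := by
        rw [← mul_assoc, ENNReal.inv_mul_cancel hc0 hctop, one_mul]
    _ ≤ c⁻¹ * F s := mul_le_mul_right h c⁻¹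
end

section
/- Domination principle: let A be measurable with respect to the partition into n-cylinders, ν a finite Radon measure supported in A with 𝔾_r*(ν) well defined (0 < r ≤ R), and μ a 1/r-excessive measure. If μ|_A ≥ 𝔾_r*(ν)|_A, then μ ≥ 𝔾_r*(ν) globally. -/
set_option maxHeartbeats 1000000


open MeasureTheory
open scoped ENNReal

/-- **domination principle.** Let `A` be a union of `n`-cylinders, `ν` a
finite Radon measure supported in `A` with well-defined (σ-finite) potential
`𝔾_r*(ν) = Σ_n r^n (𝓛*)^n ν`, `0 < r ≤ R`, and `μ` a `1/r`-excessive measure. If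
`μ|_A ≥ 𝔾_r*(ν)|_A`, then `μ ≥ 𝔾_r*(ν)` globally. -/
theorem domination_principle
    {X : Type*} [MeasurableSpace X]
    (Ldual : Measure X → Measure X)
    (hmono : Monotone Ldual)
    (hadd : ∀ μ ν : Measure X, Ldual (μ + ν) = Ldual μ + Ldual ν)
    (hsmul : ∀ (c : ℝ≥0∞) (μ : Measure X), Ldual (c • μ) = c • Ldual μ)
    (r : ℝ) (hr : 0 < r)
    (A : Set X) (hA : MeasurableSet A)
    (ν : Measure X) [IsFiniteMeasure ν]
    (hsupp : ν Aᶜ = 0)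
    (hwd : SigmaFinite (Measure.sum fun n : ℕ => ENNReal.ofReal (r ^ n) • Ldual^[n] ν))
    (μ : Measure X)
    (hexc : Ldual μ ≤ (ENNReal.ofReal r)⁻¹ • μ)
    (hdom : (Measure.sum fun n : ℕ =>
        ENNReal.ofReal (r ^ n) • Ldual^[n] ν).restrict A ≤ μ.restrict A) :
    (Measure.sum fun n : ℕ => ENNReal.ofReal (r ^ n) • Ldual^[n] ν) ≤ μ := by
  classical
  set c : ℝ≥0∞ := ENNReal.ofReal r with hc
  have hrc : ∀ n : ℕ, ENNReal.ofReal (r ^ n) = c ^ n := fun n => by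
    rw [hc, ENNReal.ofReal_pow hr.le]
  simp only [hrc] at hdom ⊢
  set G : Measure X := Measure.sum (fun n : ℕ => c ^ n • Ldual^[n] ν) with hG
  -- basic facts about `Ldual`
  have hL0 : Ldual 0 = 0 := by
    have h := hsmul 0 0
    simpa using h
  -- the "step staying outside A" operator
  set S : Measure X → Measure X := fun η => (Ldual η).restrict Aᶜ with hSdef
  have hSmono : Monotone S := fun a b h => Measure.restrict_mono subset_rfl (hmono h)
  have hSadd : ∀ a b, S (a + b) = S a + S b := fun a b => by
    simp only [hSdef, hadd, Measure.restrict_add]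
  have hSsmul : ∀ (x : ℝ≥0∞) (a : Measure X), S (x • a) = x • S a := fun x a => by
    simp only [hSdef, hsmul, Measure.restrict_smul]
  have hS0 : S 0 = 0 := by
    have h : ((0 : ℝ≥0∞) • (0 : Measure X)) = (0 : Measure X) := by simp
    rw [← h, hSsmul]; simp
  have hS_sum : ∀ (F : Finset ℕ) (f : ℕ → Measure X),
      S (∑ k ∈ F, f k) = ∑ k ∈ F, S (f k) := by
    intro F f
    induction F using Finset.induction_on with
    | empty => simpa using hS0
    | insert _ _ hx ih => rw [Finset.sum_insert hx, Finset.sum_insert hx, hSadd, ih]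
  have hSit_mono : ∀ m : ℕ, Monotone (S^[m]) := by
    intro m
    induction m with
    | zero => exact monotone_id
    | succ m ih =>
      intro a b h
      rw [Function.iterate_succ_apply', Function.iterate_succ_apply']
      exact hSmono (ih h)
  have hSit_smul : ∀ (m : ℕ) (x : ℝ≥0∞) (a : Measure X), S^[m] (x • a) = x • S^[m] a := by
    intro m
    induction m with
    | zero => intro x a; rfl
    | succ m ih =>
      intro x a
      rw [Function.iterate_succ_apply', Function.iterate_succ_apply', ih, hSsmul]
  have hSit_add : ∀ (m : ℕ) (a b : Measure X), S^[m] (a + b) = S^[m] a + S^[m] b := by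
    intro m
    induction m with
    | zero => intro a b; rfl
    | succ m ih =>
      intro a b
      rw [Function.iterate_succ_apply', Function.iterate_succ_apply',
        Function.iterate_succ_apply', ih, hSadd]
  have hSit_0 : ∀ m : ℕ, S^[m] (0 : Measure X) = 0 := by
    intro m
    induction m with
    | zero => rfl
    | succ m ih => rw [Function.iterate_succ_apply', ih, hS0]
  have hSit_sum : ∀ (m : ℕ) (F : Finset ℕ) (f : ℕ → Measure X),
      S^[m] (∑ k ∈ F, f k) = ∑ k ∈ F, S^[m] (f k) := by
    intro m F f
    induction F using Finset.induction_on with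
    | empty => simpa using hSit_0 m
    | insert _ _ hx ih => rw [Finset.sum_insert hx, Finset.sum_insert hx, hSit_add, ih]
  -- ν is carried by A
  have hν : ν.restrict A = ν := by
    conv_rhs => rw [← Measure.restrict_add_restrict_compl (μ := ν) hA]
    rw [Measure.restrict_eq_zero.mpr hsupp, add_zero]
  -- the last-exit decomposition identity
  have hid : ∀ n : ℕ, Ldual^[n] ν
      = ∑ m ∈ Finset.range (n + 1), S^[m] ((Ldual^[n - m] ν).restrict A) := by
    intro n
    induction n with
    | zero => simp [hν]
    | succ n ih =>
      have h2 : ∀ i ∈ Finset.range (n + 1), S^[i + 1] ((Ldual^[n + 1 - (i + 1)] ν).restrict A)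
          = S (S^[i] ((Ldual^[n - i] ν).restrict A)) := by
        intro i _
        rw [Function.iterate_succ_apply', Nat.succ_sub_succ]
      rw [Finset.sum_range_succ', Finset.sum_congr rfl h2, ← hS_sum, ← ih]
      show Ldual^[n + 1] ν = S (Ldual^[n] ν) + (Ldual^[n + 1 - 0] ν).restrict A
      have h3 : Ldual^[n + 1] ν = Ldual (Ldual^[n] ν) := Function.iterate_succ_apply' _ _ _
      rw [Nat.sub_zero, h3, hSdef]
      exact (Measure.restrict_compl_add_restrict hA).symm
  -- excessivity : `c • Ldual μ ≤ μ`
  have hc0 : c ≠ 0 := by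
    simp [hc, ENNReal.ofReal_eq_zero, not_le, hr]
  have hctop : c ≠ ∞ := ENNReal.ofReal_ne_top
  have hsmul_mono : ∀ (x : ℝ≥0∞) {a b : Measure X}, a ≤ b → x • a ≤ x • b := by
    intro x a b h
    refine Measure.le_iff'.mpr fun s => ?_
    simp only [Measure.smul_apply, smul_eq_mul]
    exact mul_le_mul_right (Measure.le_iff'.mp h s) x
  have hcLμ : c • Ldual μ ≤ μ := by
    calc c • Ldual μ ≤ c • (c⁻¹ • μ) := hsmul_mono c hexc
      _ = (c * c⁻¹) • μ := by rw [smul_smul]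
      _ = μ := by rw [ENNReal.mul_inv_cancel hc0 hctop, one_smul]
  -- partial sums of the reduite of μ on A are dominated by μ
  have hμbound : ∀ M : ℕ, (∑ m ∈ Finset.range M, c ^ m • S^[m] (μ.restrict A)) ≤ μ := by
    intro M
    induction M with
    | zero => simpa using μ.zero_le
    | succ M ih =>
      rw [Finset.sum_range_succ']
      have hkey : (∑ i ∈ Finset.range M, c ^ (i + 1) • S^[i + 1] (μ.restrict A))
          = c • S (∑ i ∈ Finset.range M, c ^ i • S^[i] (μ.restrict A)) := by
        conv_rhs => rw [hS_sum, Finset.smul_sum]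
        refine Finset.sum_congr rfl fun i _ => ?_
        rw [hSsmul, smul_smul, ← pow_succ', Function.iterate_succ_apply']
      rw [hkey]
      have h1 : c • S (∑ i ∈ Finset.range M, c ^ i • S^[i] (μ.restrict A))
          ≤ μ.restrict Aᶜ := by
        calc c • S (∑ i ∈ Finset.range M, c ^ i • S^[i] (μ.restrict A))
            ≤ c • S μ := hsmul_mono c (hSmono ih)
          _ = (c • Ldual μ).restrict Aᶜ := by
              rw [hSdef]; simp [Measure.restrict_smul]
          _ ≤ μ.restrict Aᶜ := Measure.restrict_mono subset_rfl hcLμ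
      have h2 : (c ^ 0 • S^[0] (μ.restrict A)) = μ.restrict A := by simp
      rw [h2]
      calc c • S (∑ i ∈ Finset.range M, c ^ i • S^[i] (μ.restrict A)) + μ.restrict A
          ≤ μ.restrict Aᶜ + μ.restrict A := add_le_add_left h1 _
        _ = μ := Measure.restrict_compl_add_restrict hA
  -- finite partial sums of G are below G
  have hGpart : ∀ F : Finset ℕ, (∑ k ∈ F, c ^ k • Ldual^[k] ν) ≤ G := by
    intro F
    refine Measure.le_iff.mpr fun s hs => ?_
    rw [Measure.finset_sum_apply, hG, Measure.sum_apply _ hs]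
    exact ENNReal.sum_le_tsum F
  -- the main estimate, at a fixed measurable set
  refine Measure.le_iff.mpr fun s hs => ?_
  have hGA : G.restrict A ≤ μ.restrict A := hdom
  set a : ℕ → ℕ → ℝ≥0∞ := fun m k => (S^[m] ((Ldual^[k] ν).restrict A)) s with ha
  have hbound : ∀ m : ℕ, (∑' k, c ^ k * a m k) ≤ (S^[m] (μ.restrict A)) s := by
    intro m
    rw [ENNReal.tsum_eq_iSup_sum]
    refine iSup_le fun F => ?_
    have hF : (∑ k ∈ F, c ^ k * a m k)
        = (S^[m] ((∑ k ∈ F, c ^ k • Ldual^[k] ν).restrict A)) s := by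
      have hres : (∑ k ∈ F, c ^ k • Ldual^[k] ν).restrict A
          = ∑ k ∈ F, c ^ k • (Ldual^[k] ν).restrict A := by
        induction F using Finset.induction_on with
        | empty => simp
        | insert _ _ hx ih =>
          rw [Finset.sum_insert hx, Finset.sum_insert hx, Measure.restrict_add,
            Measure.restrict_smul, ih]
      rw [hres, hSit_sum]
      rw [Measure.finset_sum_apply]
      refine Finset.sum_congr rfl fun k _ => ?_
      rw [hSit_smul, Measure.smul_apply, smul_eq_mul, ha]
    rw [hF]
    have hle : (∑ k ∈ F, c ^ k • Ldual^[k] ν).restrict A ≤ μ.restrict A :=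
      le_trans (Measure.restrict_mono subset_rfl (hGpart F)) hGA
    exact Measure.le_iff'.mp (hSit_mono m hle) s
  -- rewrite G s as a double sum
  have hGs : G s = ∑' n : ℕ, ∑' m : ℕ,
      (if m < n + 1 then c ^ m * (c ^ (n - m) * a m (n - m)) else 0) := by
    rw [hG, Measure.sum_apply _ hs]
    refine tsum_congr fun n => ?_
    rw [Measure.smul_apply, smul_eq_mul]
    have hval : (Ldual^[n] ν) s = ∑ m ∈ Finset.range (n + 1), a m (n - m) := by
      rw [hid n, Measure.finset_sum_apply]
    rw [hval, Finset.mul_sum]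
    rw [tsum_eq_sum (s := Finset.range (n + 1))
      (fun m hm => by rw [if_neg (by simpa using hm)])]
    refine Finset.sum_congr rfl fun m hm => ?_
    have hm' : m < n + 1 := Finset.mem_range.mp hm
    rw [if_pos hm', ← mul_assoc, ← pow_add]
    congr 2
    omega
  rw [hGs, ENNReal.tsum_comm]
  have hshift : ∀ m : ℕ, (∑' n : ℕ,
      (if m < n + 1 then c ^ m * (c ^ (n - m) * a m (n - m)) else 0))
      = c ^ m * ∑' k : ℕ, c ^ k * a m k := by
    intro m
    set f : ℕ → ℝ≥0∞ :=
      fun n => if m < n + 1 then c ^ m * (c ^ (n - m) * a m (n - m)) else 0 with hf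
    have h := Summable.sum_add_tsum_nat_add' (f := f) (k := m) ENNReal.summable
    have hzero : (∑ i ∈ Finset.range m, f i) = 0 := by
      refine Finset.sum_eq_zero fun i hi => ?_
      have : i < m := Finset.mem_range.mp hi
      rw [hf]
      exact if_neg (by omega)
    rw [← h, hzero, zero_add]
    have hfk : ∀ k : ℕ, f (k + m) = c ^ m * (c ^ k * a m k) := by
      intro k
      rw [hf]
      simp only
      rw [if_pos (by omega), Nat.add_sub_cancel]
    rw [tsum_congr hfk, ENNReal.tsum_mul_left]
  calc (∑' m : ℕ, ∑' n : ℕ,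
        (if m < n + 1 then c ^ m * (c ^ (n - m) * a m (n - m)) else 0))
      = ∑' m : ℕ, c ^ m * ∑' k : ℕ, c ^ k * a m k := tsum_congr hshift
    _ ≤ ∑' m : ℕ, c ^ m * (S^[m] (μ.restrict A)) s :=
        ENNReal.tsum_le_tsum fun m => mul_le_mul_right (hbound m) _
    _ ≤ μ s := by
        rw [ENNReal.tsum_eq_iSup_sum]
        refine iSup_le fun F => ?_
        have hsub : F ⊆ Finset.range (F.sup id + 1) := fun x hx =>
          Finset.mem_range.mpr (Nat.lt_succ_of_le (Finset.le_sup (f := id) hx))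
        calc (∑ m ∈ F, c ^ m * (S^[m] (μ.restrict A)) s)
            ≤ ∑ m ∈ Finset.range (F.sup id + 1), c ^ m * (S^[m] (μ.restrict A)) s :=
              Finset.sum_le_sum_of_subset hsub
          _ = (∑ m ∈ Finset.range (F.sup id + 1), c ^ m • S^[m] (μ.restrict A)) s := by
              rw [Measure.finset_sum_apply]
              exact Finset.sum_congr rfl fun m _ => by
                rw [Measure.smul_apply, smul_eq_mul]
          _ ≤ μ s := Measure.le_iff'.mp (hμbound (F.sup id + 1)) s
end
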